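/- If a tree T has a vertex v of degree d \geq 3 whose deletion leaves subtrees of sizes t_1 \geq ... \geq t_d, and T has a connected partition of type \mu, then the spider S(t_1,...,t_d) also has a connected partition of type \mu. -/

import Mathlib

open SimpleGraph

/-- The spider graph with `d` legs of lengths `l i`: a centre vertex (`none`)
joined to one endpoint of each of `d` disjoint paths with `l i` vertices. -/
def spider (d : ℕ) (l : Fin d → ℕ) : SimpleGraph (Option (Σ i : Fin d, Fin (l i))) :=
  SimpleGraph.fromRel (fun u v =>
    (∃ (i : Fin d) (h : 0 < l i), u = none ∧ v = some ⟨i, ⟨0, h⟩⟩) ∨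
    (∃ (i : Fin d) (j k : Fin (l i)), (j : ℕ) + 1 = (k : ℕ) ∧ u = some ⟨i, j⟩ ∧ v = some ⟨i, k⟩))

/-- A graph has a connected partition of type `μ` if its vertex set can be partitioned
into blocks, each inducing a connected subgraph, whose multiset of sizes is `μ`. -/
def HasConnectedPartition {V : Type} [Fintype V] [DecidableEq V]
    (G : SimpleGraph V) (μ : Multiset ℕ) : Prop :=
  ∃ P : Finpartition (Finset.univ : Finset V),
    (∀ p ∈ P.parts, (G.induce (p : Set V)).Connected) ∧
    P.parts.val.map Finset.card = μ



lemma induce_connected_of_descent {W : Type*} (G : SimpleGraph W) (S : Set W)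
    (m : W → ℕ) (r : W) (hr : r ∈ S)
    (hdesc : ∀ x ∈ S, x ≠ r → ∃ y ∈ S, G.Adj x y ∧ m y < m x) :
    (G.induce S).Connected := by
  have key : ∀ k (x : W) (hx : x ∈ S), m x ≤ k → (G.induce S).Reachable ⟨r, hr⟩ ⟨x, hx⟩ := by
    intro k
    induction k with
    | zero =>
      intro x hx hm
      by_cases hxr : x = r
      · subst hxr; rfl
      · obtain ⟨y, hy, -, hlt⟩ := hdesc x hx hxr; omega
    | succ k ih =>
      intro x hx hm
      by_cases hxr : x = r
      · subst hxr; rfl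
      · obtain ⟨y, hy, hadj, hlt⟩ := hdesc x hx hxr
        have h1 : (G.induce S).Adj ⟨y, hy⟩ ⟨x, hx⟩ := by
          simp [comap_adj, hadj.symm]
        exact (ih y hy (by omega)).trans h1.reachable
  rw [connected_iff_exists_forall_reachable]
  exact ⟨⟨r, hr⟩, fun w => key (m w.1) w.1 w.2 le_rfl⟩


lemma spider_adj_some_some {d : ℕ} {l : Fin d → ℕ} (a b : Σ i : Fin d, Fin (l i))
    (h1 : a.1 = b.1) (h2 : (a.2 : ℕ) + 1 = (b.2 : ℕ)) :
    (spider d l).Adj (some a) (some b) := by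
  obtain ⟨i, j⟩ := a
  obtain ⟨i', k⟩ := b
  dsimp at h1 h2
  subst h1
  rw [spider, SimpleGraph.fromRel_adj]
  refine ⟨fun hc => ?_, Or.inl (Or.inr ⟨i, j, k, h2, rfl, rfl⟩)⟩
  have hjk : j = k := by
    have h3 := Option.some.inj hc
    injection h3 with h4 h5
  rw [hjk] at h2
  omega

lemma spider_adj_none_some {d : ℕ} {l : Fin d → ℕ} (b : Σ i : Fin d, Fin (l i))
    (h : (b.2 : ℕ) = 0) : (spider d l).Adj none (some b) := by
  obtain ⟨i, k⟩ := b
  dsimp at h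
  rw [spider, SimpleGraph.fromRel_adj]
  refine ⟨by simp, Or.inl (Or.inl ⟨i, k.pos, rfl, ?_⟩)⟩
  exact congrArg some (congrArg (Sigma.mk i) (Fin.ext h))

lemma nat_sandwich {n e1 c1 c2 : ℕ} (he : e1 < n) (h1 : c2 * n ≤ e1 + c1 * n)
    (h2 : e1 + c1 * n < (c2 + 1) * n) : c1 = c2 := by
  rcases lt_trichotomy c1 c2 with hlt | heq | hgt
  · exfalso
    have hh : (c1 + 1) * n ≤ c2 * n := Nat.mul_le_mul_right n (Nat.succ_le_of_lt hlt)
    have : (c1 + 1) * n = c1 * n + n := by ring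
    omega
  · exact heq
  · exfalso
    have hh : (c2 + 1) * n ≤ c1 * n := Nat.mul_le_mul_right n (Nat.succ_le_of_lt hgt)
    omega

namespace SpiderAux

variable {V : Type} [Fintype V] [DecidableEq V]

noncomputable def cmp (T : SimpleGraph V) (v : V) {d : ℕ}
    (e : (T.induce {u | u ≠ v}).ConnectedComponent ≃ Fin d) (u : V) (hu : u ≠ v) : Fin d :=
  e ((T.induce {u | u ≠ v}).connectedComponentMk ⟨u, hu⟩)

open Classical in
noncomputable def Ci (T : SimpleGraph V) (v : V) {d : ℕ}
    (e : (T.induce {u | u ≠ v}).ConnectedComponent ≃ Fin d) (i : Fin d) : Finset V :=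
  Finset.univ.filter (fun u => ∃ hu : u ≠ v, cmp T v e u hu = i)

noncomputable def idx (p : Finset V) : ℕ :=
  p.sup (fun w => Fintype.card V - (Fintype.equivFin V w : ℕ))

noncomputable def coord (P : Finpartition (Finset.univ : Finset V)) (v u : V) : ℕ :=
  if P.part u = P.part v then 0 else idx (P.part u) + 1

noncomputable def key (P : Finpartition (Finset.univ : Finset V)) (v u : V) : ℕ :=
  (Fintype.equivFin V u : ℕ) + coord P v u * Fintype.card V

open Classical in
noncomputable def rk (T : SimpleGraph V) (v : V) {d : ℕ}
    (e : (T.induce {u | u ≠ v}).ConnectedComponent ≃ Fin d)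
    (P : Finpartition (Finset.univ : Finset V)) (u : V) (hu : u ≠ v) : ℕ :=
  ((Ci T v e (cmp T v e u hu)).filter (fun w => key P v w < key P v u)).card

noncomputable def g (T : SimpleGraph V) (v : V) {d : ℕ}
    (e : (T.induce {u | u ≠ v}).ConnectedComponent ≃ Fin d)
    (t : Fin d → ℕ) (P : Finpartition (Finset.univ : Finset V))
    (hlt : ∀ u (hu : u ≠ v), rk T v e P u hu < t (cmp T v e u hu)) (u : V) :
    Option (Σ i : Fin d, Fin (t i)) :=
  if hu : u = v then none else some ⟨cmp T v e u hu, ⟨rk T v e P u hu, hlt u hu⟩⟩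

end SpiderAux

open SpiderAux

/-- If a tree `T` has a vertex `v` of degree `d ≥ 3` whose deletion leaves subtrees of sizes
`t 0 ≥ ... ≥ t (d-1)`, and `T` has a connected partition of type `μ`, then the spider
`S(t)` has a connected partition of type `μ` as well. -/
theorem tree_connected_partition_to_spider {V : Type} [Fintype V] [DecidableEq V]
    (T : SimpleGraph V) [DecidableRel T.Adj] (hT : T.IsTree) (v : V)
    (d : ℕ) (hd : 3 ≤ d) (hdeg : T.degree v = d)
    (t : Fin d → ℕ) (hmono : ∀ i j : Fin d, i ≤ j → t j ≤ t i)
    (e : (T.induce {u | u ≠ v}).ConnectedComponent ≃ Fin d)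
    (hsize : ∀ c, Nat.card c.supp = t (e c))
    (μ : Multiset ℕ) (h : HasConnectedPartition T μ) :
    HasConnectedPartition (spider d t) μ := by
  classical
  obtain ⟨P, hPconn, hPμ⟩ := h
  have hn0 : 0 < Fintype.card V := Fintype.card_pos_iff.2 ⟨v⟩
  have hkeylt : ∀ u : V, ((Fintype.equivFin V) u : ℕ) < Fintype.card V :=
    fun u => ((Fintype.equivFin V) u).isLt
  -- key injective
  have hkeyinj : Function.Injective (key P v) := by
    intro a b hab
    unfold key at hab
    have h1 := hkeylt a
    have h2 := hkeylt b
    have hco : coord P v a = coord P v b := by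
      rcases lt_trichotomy (coord P v a) (coord P v b) with hlt | heq | hgt
      · exfalso
        have hh : (coord P v a + 1) * Fintype.card V ≤ coord P v b * Fintype.card V :=
          Nat.mul_le_mul_right _ (Nat.succ_le_of_lt hlt)
        have he : (coord P v a + 1) * Fintype.card V = coord P v a * Fintype.card V + Fintype.card V := by ring
        omega
      · exact heq
      · exfalso
        have hh : (coord P v b + 1) * Fintype.card V ≤ coord P v a * Fintype.card V :=
          Nat.mul_le_mul_right _ (Nat.succ_le_of_lt hgt)
        have he : (coord P v b + 1) * Fintype.card V = coord P v b * Fintype.card V + Fintype.card V := by ring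
        omega
    rw [hco] at hab
    have : ((Fintype.equivFin V) a : ℕ) = (Fintype.equivFin V) b := by omega
    exact (Fintype.equivFin V).injective (Fin.ext this)
  -- coord determines part
  have hcoord_eq : ∀ a b : V, coord P v a = coord P v b → P.part a = P.part b := by
    intro a b hab
    unfold coord at hab
    split_ifs at hab with h1 h2 h2
    · rw [h1, h2]
    · have hab' : idx (P.part a) = idx (P.part b) := by omega
      obtain ⟨wa, hwa, hwa'⟩ := Finset.exists_mem_eq_sup (P.part a)
        ⟨a, P.mem_part (Finset.mem_univ a)⟩ (fun w => Fintype.card V - ((Fintype.equivFin V) w : ℕ))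
      obtain ⟨wb, hwb, hwb'⟩ := Finset.exists_mem_eq_sup (P.part b)
        ⟨b, P.mem_part (Finset.mem_univ b)⟩ (fun w => Fintype.card V - ((Fintype.equivFin V) w : ℕ))
      have hwab : wa = wb := by
        have e1 : Fintype.card V - ((Fintype.equivFin V) wa : ℕ)
            = Fintype.card V - ((Fintype.equivFin V) wb : ℕ) := by
          have ha2 : idx (P.part a) = Fintype.card V - ((Fintype.equivFin V) wa : ℕ) := by
            unfold idx; rw [hwa']
          have h2' : idx (P.part b) = Fintype.card V - ((Fintype.equivFin V) wb : ℕ) := by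
            unfold idx; rw [hwb']
          omega
        have ha' := hkeylt wa
        have hb' := hkeylt wb
        have : ((Fintype.equivFin V) wa : ℕ) = (Fintype.equivFin V) wb := by omega
        exact (Fintype.equivFin V).injective (Fin.ext this)
      exact P.eq_of_mem_parts (P.part_mem.2 (Finset.mem_univ a)) (P.part_mem.2 (Finset.mem_univ b))
        (hwab ▸ hwa) hwb
  have hcoord_part : ∀ a b : V, P.part a = P.part b → coord P v a = coord P v b := by
    intro a b hab; unfold coord; rw [hab]
  have hCi_mem : ∀ (u : V) (hu : u ≠ v), u ∈ Ci T v e (cmp T v e u hu) := by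
    intro u hu
    unfold Ci
    simp only [Finset.mem_filter, Finset.mem_univ, true_and]
    exact ⟨hu, trivial⟩
  have hCi_elim : ∀ (i : Fin d) (u : V), u ∈ Ci T v e i → ∃ hu : u ≠ v, cmp T v e u hu = i := by
    intro i u hu
    unfold Ci at hu
    simpa using hu
  have hCicard : ∀ i, (Ci T v e i).card = t i := by
    intro i
    have h1 : Nat.card ((e.symm i).supp) = t i := by
      have := hsize (e.symm i)
      rwa [e.apply_symm_apply] at this
    rw [← h1, ← Nat.card_eq_finsetCard]
    apply Nat.card_congr
    refine Equiv.ofBijective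
      (fun x => ⟨⟨x.1, (hCi_elim i x.1 x.2).choose⟩, ?_⟩) ⟨?_, ?_⟩
    · rw [ConnectedComponent.mem_supp_iff]
      apply e.injective
      rw [e.apply_symm_apply]
      exact (hCi_elim i x.1 x.2).choose_spec
    · intro x y hxy
      apply Subtype.ext
      exact congrArg (fun z => (z.1.1 : V)) hxy
    · rintro ⟨⟨u, hu⟩, hmem⟩
      rw [ConnectedComponent.mem_supp_iff] at hmem
      have humem : u ∈ Ci T v e i := by
        unfold Ci
        simp only [Finset.mem_filter, Finset.mem_univ, true_and]
        refine ⟨hu, ?_⟩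
        unfold SpiderAux.cmp
        rw [hmem, e.apply_symm_apply]
      exact ⟨⟨u, humem⟩, Subtype.ext (Subtype.ext rfl)⟩
  have hrklt : ∀ (u : V) (hu : u ≠ v), rk T v e P u hu < t (cmp T v e u hu) := by
    intro u hu
    rw [← hCicard (SpiderAux.cmp T v e u hu)]
    unfold rk
    apply Finset.card_lt_card
    rw [Finset.ssubset_iff_of_subset (Finset.filter_subset _ _)]
    exact ⟨u, hCi_mem u hu, by simp⟩
  have hrkmono : ∀ (u : V) (hu : u ≠ v) (w : V) (hw : w ≠ v),
      cmp T v e u hu = cmp T v e w hw → key P v u < key P v w →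
      rk T v e P u hu < rk T v e P w hw := by
    intro u hu w hw hc hk
    unfold rk
    rw [hc]
    apply Finset.card_lt_card
    rw [Finset.ssubset_iff_of_subset]
    · exact ⟨u, Finset.mem_filter.2 ⟨hc ▸ hCi_mem u hu, hk⟩, by simp⟩
    · exact Finset.monotone_filter_right _ (fun x _ hx => lt_trans hx hk)
  have hrkpred : ∀ (u : V) (hu : u ≠ v), 0 < rk T v e P u hu →
      ∃ (u' : V) (hu' : u' ≠ v), cmp T v e u' hu' = cmp T v e u hu ∧
        rk T v e P u' hu' = rk T v e P u hu - 1 ∧ key P v u' < key P v u ∧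
        ∀ w ∈ Ci T v e (cmp T v e u hu), key P v w < key P v u → key P v w ≤ key P v u' := by
    intro u hu hpos
    have hFne : ((Ci T v e (cmp T v e u hu)).filter (fun w => key P v w < key P v u)).Nonempty := by
      rw [← Finset.card_pos]
      exact hpos
    obtain ⟨u', hu'F, hmax⟩ := Finset.exists_max_image _ (key P v) hFne
    obtain ⟨hu'mem, hu'key⟩ := Finset.mem_filter.1 hu'F
    obtain ⟨hu'v, hu'cmp⟩ := hCi_elim _ u' hu'mem
    refine ⟨u', hu'v, hu'cmp, ?_, hu'key, fun w hw hwk => hmax w (Finset.mem_filter.2 ⟨hw, hwk⟩)⟩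
    have hset : (Ci T v e (cmp T v e u hu)).filter (fun w => key P v w < key P v u')
        = ((Ci T v e (cmp T v e u hu)).filter (fun w => key P v w < key P v u)).erase u' := by
      ext w
      simp only [Finset.mem_erase, Finset.mem_filter]
      constructor
      · rintro ⟨hw1, hw2⟩
        exact ⟨fun hww => by subst hww; omega, hw1, lt_trans hw2 hu'key⟩
      · rintro ⟨hne, hw1, hw2⟩
        refine ⟨hw1, lt_of_le_of_ne (hmax w (Finset.mem_filter.2 ⟨hw1, hw2⟩))
          (fun hkk => hne (hkeyinj hkk))⟩
    unfold rk
    rw [hu'cmp, hset, Finset.card_erase_of_mem hu'F]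
  have hsum : ∑ i, t i = Fintype.card V - 1 := by
    have hf : ∀ x ∈ Finset.univ.erase v,
        (if hx : x = v then (⟨0, by omega⟩ : Fin d) else cmp T v e x hx) ∈
          (Finset.univ : Finset (Fin d)) := fun _ _ => Finset.mem_univ _
    have hfib := Finset.card_eq_sum_card_fiberwise hf
    rw [Finset.card_erase_of_mem (Finset.mem_univ v), Finset.card_univ] at hfib
    rw [hfib]
    apply Finset.sum_congr rfl
    intro i _
    rw [← hCicard i]
    congr 1
    ext u
    simp only [Finset.mem_filter, Finset.mem_erase, Finset.mem_univ, and_true, true_and]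
    constructor
    · intro hu
      obtain ⟨hne, hc⟩ := hCi_elim i u hu
      exact ⟨hne, by rw [dif_neg hne]; exact hc⟩
    · rintro ⟨hne, hc⟩
      rw [dif_neg hne] at hc
      unfold Ci
      simp only [Finset.mem_filter, Finset.mem_univ, true_and]
      exact ⟨hne, hc⟩
  have hcardW : Fintype.card (Option (Σ i : Fin d, Fin (t i))) = Fintype.card V := by
    rw [Fintype.card_option, Fintype.card_sigma]
    simp only [Fintype.card_fin]
    rw [hsum]
    omega
  set G := g T v e t P hrklt with hG
  have hgv : G v = none := dif_pos rfl
  have hgsome : ∀ (u : V) (hu : u ≠ v),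
      G u = some ⟨cmp T v e u hu, ⟨rk T v e P u hu, hrklt u hu⟩⟩ := fun u hu => dif_neg hu
  have hginj : Function.Injective G := by
    intro a b hab
    rw [hG] at hab
    unfold g at hab
    by_cases ha : a = v <;> by_cases hb : b = v
    · rw [ha, hb]
    · rw [dif_pos ha, dif_neg hb] at hab; exact absurd hab (by simp)
    · rw [dif_neg ha, dif_pos hb] at hab; exact absurd hab (by simp)
    · rw [dif_neg ha, dif_neg hb] at hab
      have hab2 := Option.some.inj hab
      have h1 : cmp T v e a ha = cmp T v e b hb := congrArg Sigma.fst hab2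
      have h2 : rk T v e P a ha = rk T v e P b hb :=
        congrArg (fun x : Σ i : Fin d, Fin (t i) => (x.2 : ℕ)) hab2
      rcases lt_trichotomy (key P v a) (key P v b) with hk | hk | hk
      · exact absurd (hrkmono a ha b hb h1 hk) (by omega)
      · exact hkeyinj hk
      · exact absurd (hrkmono b hb a ha h1.symm hk) (by omega)
  have hgbij : Function.Bijective G := (Fintype.bijective_iff_injective_and_card _).2 ⟨hginj, hcardW.symm⟩
  refine ⟨⟨P.parts.image (fun p => p.image G), ?_, ?_, ?_⟩, ?_, ?_⟩
  · -- supIndep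
    rw [Finset.supIndep_iff_pairwiseDisjoint]
    intro a ha b hb hab
    simp only [Finset.coe_image, Set.mem_image, Finset.mem_coe] at ha hb
    obtain ⟨p, hp, rfl⟩ := ha
    obtain ⟨q, hq, rfl⟩ := hb
    have hpq : p ≠ q := fun hh => hab (by rw [hh])
    simp only [Function.onFun, id_eq]
    rw [Finset.disjoint_image hginj]
    exact P.disjoint hp hq hpq
  · -- sup_parts
    apply Finset.eq_univ_of_forall
    intro w
    obtain ⟨u, rfl⟩ := hgbij.surjective w
    rw [Finset.mem_sup]
    obtain ⟨p, hp, hup⟩ := P.exists_mem (Finset.mem_univ u)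
    exact ⟨p.image G, Finset.mem_image_of_mem _ hp, Finset.mem_image_of_mem _ hup⟩
  · -- not_bot_mem
    intro hbot
    rw [Finset.bot_eq_empty] at hbot
    obtain ⟨p, hp, hpe⟩ := Finset.mem_image.1 hbot
    rw [Finset.image_eq_empty] at hpe
    subst hpe
    exact P.bot_notMem hp
  · -- connectivity
    intro q hq
    obtain ⟨p, hp, rfl⟩ := Finset.mem_image.1 hq
    by_cases hv : v ∈ p
    · -- the block containing the centre
      apply induce_connected_of_descent _ _
        (fun w => w.elim 0 (fun a => (a.2 : ℕ) + 1)) none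
        (Finset.mem_coe.2 (Finset.mem_image.2 ⟨v, hv, hgv⟩))
      intro x hx hxr
      obtain ⟨u, hup, hgu⟩ := Finset.mem_image.1 (Finset.mem_coe.1 hx)
      have huv : u ≠ v := fun hh => hxr (by rw [← hgu, hh, hgv])
      have hpartu : P.part u = p := P.part_eq_of_mem hp hup
      have hpartv : P.part v = p := P.part_eq_of_mem hp hv
      have hcu : coord P v u = 0 := by
        unfold coord; rw [if_pos (by rw [hpartu, hpartv])]
      have hku : key P v u < Fintype.card V := by
        unfold key; rw [hcu]; simpa using hkeylt u
      by_cases h0 : rk T v e P u huv = 0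
      · refine ⟨none, Finset.mem_coe.2 (Finset.mem_image.2 ⟨v, hv, hgv⟩), ?_, ?_⟩
        · rw [← hgu, hgsome u huv]
          exact (spider_adj_none_some _ h0).symm
        · rw [← hgu, hgsome u huv]
          show (0 : ℕ) < rk T v e P u huv + 1
          omega
      · obtain ⟨u', hu'v, hcmp', hrk', hkey', hmaxk⟩ := hrkpred u huv (Nat.pos_of_ne_zero h0)
        have hc' : coord P v u' = 0 := by
          have hk'lt : key P v u' < Fintype.card V := lt_trans hkey' hku
          have hd1 : key P v u' = ((Fintype.equivFin V) u' : ℕ) + coord P v u' * Fintype.card V := rfl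
          apply nat_sandwich (hkeylt u')
          · rw [← hd1]; omega
          · rw [← hd1]
            have hone : (0 + 1) * Fintype.card V = Fintype.card V := by ring
            omega
        have hu'p : u' ∈ p := by
          have h5 : P.part u' = P.part v := hcoord_eq u' v (by
            rw [hc']; unfold coord; rw [if_pos rfl])
          rw [hpartv] at h5
          rw [← h5]; exact P.mem_part (Finset.mem_univ u')
        refine ⟨G u', Finset.mem_coe.2 (Finset.mem_image_of_mem _ hu'p), ?_, ?_⟩
        · rw [← hgu, hgsome u huv, hgsome u' hu'v]
          refine (spider_adj_some_some _ _ hcmp' ?_).symm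
          show rk T v e P u' hu'v + 1 = rk T v e P u huv
          have := Nat.pos_of_ne_zero h0
          omega
        · rw [← hgu, hgsome u huv, hgsome u' hu'v]
          show rk T v e P u' hu'v + 1 < rk T v e P u huv + 1
          have := Nat.pos_of_ne_zero h0
          omega
    · -- a block avoiding the centre
      have hpne := P.nonempty_of_mem_parts hp
      obtain ⟨u0, hu0p, hu0min⟩ := Finset.exists_min_image p (key P v) hpne
      have hu0v : u0 ≠ v := fun hh => hv (hh ▸ hu0p)
      have hsub : (↑p : Set V) ⊆ {u | u ≠ v} := fun x hx hh =>
        hv (Finset.mem_coe.1 (by rwa [hh] at hx))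
      have hsame : ∀ (u : V) (hup : u ∈ p) (hu : u ≠ v),
          SpiderAux.cmp T v e u hu = SpiderAux.cmp T v e u0 hu0v := by
        intro u hup hu
        unfold SpiderAux.cmp
        congr 1
        rw [ConnectedComponent.eq]
        have hconn := hPconn p hp
        have hr := hconn.preconnected ⟨u, Finset.mem_coe.2 hup⟩ ⟨u0, Finset.mem_coe.2 hu0p⟩
        exact hr.map (SimpleGraph.induceHomOfLE T hsub).toHom
      apply induce_connected_of_descent _ _
        (fun w => w.elim 0 (fun a => (a.2 : ℕ) + 1)) (G u0)
        (Finset.mem_coe.2 (Finset.mem_image_of_mem _ hu0p))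
      intro x hx hxr
      obtain ⟨u, hup, hgu⟩ := Finset.mem_image.1 (Finset.mem_coe.1 hx)
      have huv : u ≠ v := fun hh => hv (hh ▸ hup)
      have huu0 : u ≠ u0 := fun hh => hxr (by rw [← hgu, hh])
      have hkey0 : key P v u0 < key P v u :=
        lt_of_le_of_ne (hu0min u hup) (fun hh => huu0 (hkeyinj hh.symm))
      have hcmpu := hsame u hup huv
      have hpos : 0 < rk T v e P u huv :=
        Nat.lt_of_le_of_lt (Nat.zero_le _) (hrkmono u0 hu0v u huv hcmpu.symm hkey0)
      obtain ⟨u', hu'v, hcmp', hrk', hkey', hmaxk⟩ := hrkpred u huv hpos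
      have hku'0 : key P v u0 ≤ key P v u' :=
        hmaxk u0 (by rw [hcmpu]; exact hCi_mem u0 hu0v) hkey0
      have hpartu : P.part u = p := P.part_eq_of_mem hp hup
      have hpartu0 : P.part u0 = p := P.part_eq_of_mem hp hu0p
      have hc0 : coord P v u0 = coord P v u := hcoord_part _ _ (by rw [hpartu0, hpartu])
      have hco : coord P v u' = coord P v u := by
        have hd0 : key P v u0 = ((Fintype.equivFin V) u0 : ℕ) + coord P v u0 * Fintype.card V := rfl
        have hd1 : key P v u' = ((Fintype.equivFin V) u' : ℕ) + coord P v u' * Fintype.card V := rfl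
        have hd2 : key P v u = ((Fintype.equivFin V) u : ℕ) + coord P v u * Fintype.card V := rfl
        apply nat_sandwich (hkeylt u')
        · rw [← hd1]
          calc coord P v u * Fintype.card V ≤ key P v u0 := by rw [hd0, hc0]; omega
            _ ≤ key P v u' := hku'0
        · rw [← hd1]
          calc key P v u' < key P v u := hkey'
            _ < (coord P v u + 1) * Fintype.card V := by
                have hone : (coord P v u + 1) * Fintype.card V
                    = coord P v u * Fintype.card V + Fintype.card V := by ring
                have h6 := hkeylt u
                omega
      have hu'p : u' ∈ p := by
        have h5 : P.part u' = P.part u := hcoord_eq u' u hco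
        rw [hpartu] at h5
        rw [← h5]; exact P.mem_part (Finset.mem_univ u')
      refine ⟨G u', Finset.mem_coe.2 (Finset.mem_image_of_mem _ hu'p), ?_, ?_⟩
      · rw [← hgu, hgsome u huv, hgsome u' hu'v]
        refine (spider_adj_some_some _ _ hcmp' ?_).symm
        show rk T v e P u' hu'v + 1 = rk T v e P u huv
        omega
      · rw [← hgu, hgsome u huv, hgsome u' hu'v]
        show rk T v e P u' hu'v + 1 < rk T v e P u huv + 1
        omega
  · -- sizes
    have hinj2 : Set.InjOn (fun p : Finset V => p.image G) P.parts :=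
      fun a _ b _ hab => Finset.image_injective hginj hab
    show ((P.parts.image (fun p => p.image G)).val.map Finset.card) = μ
    rw [Finset.image_val_of_injOn hinj2, Multiset.map_map]
    rw [← hPμ]
    apply Multiset.map_congr rfl
    intro p _
    exact Finset.card_image_of_injective p hginj
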